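/- On U = {x ∈ ℝ⁴ : x₄ > 0} define λ²(x) = 1/x₄², τ(x) = (0,0,0, 2/x₄), and T(x) = λ²(x)·τ(x) = (0,0,0, 2/x₄³). Then for all x ∈ U: 4Δ(λ²)(x) + 2 div T(x) = 12/x₄⁴, whereas λ²(x)|τ(x)|² = 4/x₄⁴; hence 4Δ(λ²)(x) + 2 div T(x) ≠ λ²(x)|τ(x)|² for every x ∈ U. -/

import Mathlib

noncomputable section

abbrev E (n : ℕ) := EuclideanSpace ℝ (Fin n)

/-- Partial derivative in the `i`-th coordinate direction. -/
def pd {m : ℕ} (u : E m → ℝ) (i : Fin m) : E m → ℝ :=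
  fun x => fderiv ℝ u x (EuclideanSpace.single i 1)

/-- Euclidean Laplacian `Δu = Σᵢ ∂²u/∂xᵢ²`. -/
def lap {m : ℕ} (u : E m → ℝ) : E m → ℝ :=
  fun x => ∑ i, pd (pd u i) i x

/-- Euclidean divergence of a vector field. -/
def div' {m : ℕ} (V : E m → E m) : E m → ℝ :=
  fun x => ∑ i, pd (fun y => V y i) i x

/-- Square dilation of the upper half-space hyperbolic metric: `λ²(x) = 1/x₄²`. -/
def sqDil : E 4 → ℝ := fun x => ((x 3) ^ 2)⁻¹

/-- Tension field `τ(x) = (0,0,0,2/x₄)`. -/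
def tau : E 4 → E 4 := fun x => EuclideanSpace.single (3 : Fin 4) (2 / x 3)

/-- The vector field `T = λ²·τ = (0,0,0,2/x₄³)`. -/
def T : E 4 → E 4 := fun x => sqDil x • tau x

lemma zp2 (a : ℝ) : a ^ (-2 : ℤ) = (a ^ 2)⁻¹ := by rw [zpow_neg]; norm_cast
lemma zp3 (a : ℝ) : a ^ (-3 : ℤ) = (a ^ 3)⁻¹ := by rw [zpow_neg]; norm_cast
lemma zp4 (a : ℝ) : a ^ (-4 : ℤ) = (a ^ 4)⁻¹ := by rw [zpow_neg]; norm_cast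

/-- Differentiating `f ∘ (coordinate 3)` in the `i`-th direction. -/
lemma pd_comp (f : ℝ → ℝ) (i : Fin 4) (x : E 4) (hf : DifferentiableAt ℝ f (x 3)) :
    pd (fun y : E 4 => f (y 3)) i x = if i = 3 then deriv f (x 3) else 0 := by
  have h : (fun y : E 4 => f (y 3)) = f ∘ (EuclideanSpace.proj (3 : Fin 4) : E 4 →L[ℝ] ℝ) := rfl
  unfold pd
  rw [h, fderiv_comp x hf (EuclideanSpace.proj (3:Fin 4) : E 4 →L[ℝ] ℝ).differentiableAt,
    ContinuousLinearMap.fderiv]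
  simp only [ContinuousLinearMap.comp_apply, PiLp.proj_apply,
    EuclideanSpace.single_apply]
  by_cases hi : i = 3
  · simp [hi, fderiv_apply_one_eq_deriv]
  · have : (3 : Fin 4) ≠ i := fun h => hi h.symm
    simp [hi, this]

lemma pd_congr {u v : E 4 → ℝ} {i : Fin 4} {x : E 4}
    (h : u =ᶠ[nhds x] v) : pd u i x = pd v i x := by
  unfold pd; rw [h.fderiv_eq]

lemma pd_const (c : ℝ) (i : Fin 4) (x : E 4) : pd (fun _ : E 4 => c) i x = 0 := by
  unfold pd; simp

/-- Coordinates of the vector field `T`. -/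
lemma T_coord (y : E 4) (i : Fin 4) :
    T y i = if i = 3 then 2 * ((y 3) ^ 3)⁻¹ else 0 := by
  simp only [T, tau, sqDil, PiLp.smul_apply, smul_eq_mul, EuclideanSpace.single_apply]
  by_cases hi : i = 3
  · simp only [hi, if_pos rfl]
    by_cases h : y 3 = 0
    · simp [h]
    · simp only [if_true]
      field_simp
  · simp [hi]

/-- First partials of `sqDil` on the upper half space. -/
lemma pd_sqDil (i : Fin 4) (y : E 4) (hy : y 3 ≠ 0) :
    pd sqDil i y = if i = 3 then -2 * ((y 3) ^ 3)⁻¹ else 0 := by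
  have hg : sqDil = fun z : E 4 => (fun t : ℝ => t ^ (-2 : ℤ)) (z 3) := by
    funext z
    simp only [sqDil, zp2]
  rw [hg, pd_comp _ _ _ ((differentiableAt_zpow.mpr (Or.inl hy)))]
  rw [deriv_zpow]
  by_cases hi : i = 3
  · rw [if_pos hi, if_pos hi, show ((-2:ℤ) - 1) = -3 from by norm_num, zp3]
    push_cast
    ring
  · rw [if_neg hi, if_neg hi]

/-- On the upper half-space `{x₄ > 0}` of `ℝ⁴`: `4Δ(λ²) + 2divT = 12/x₄⁴` while
`λ²|τ|² = 4/x₄⁴`, so the trace identity for biharmonic morphisms fails everywhere: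
the identity map to the upper half-space model of `ℍ⁴` is not a biharmonic morphism. -/
theorem half_space_trace_identity_fails (x : E 4) (hx : 0 < x 3) :
    (∀ i : Fin 4, T x i = EuclideanSpace.single (3 : Fin 4) (2 / (x 3) ^ 3) i) ∧
    4 * lap sqDil x + 2 * div' T x = 12 / (x 3) ^ 4 ∧
    sqDil x * ‖tau x‖ ^ 2 = 4 / (x 3) ^ 4 ∧
    4 * lap sqDil x + 2 * div' T x ≠ sqDil x * ‖tau x‖ ^ 2 := by
  have ht : x 3 ≠ 0 := ne_of_gt hx
  -- the open upper half space is a neighborhood of x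
  have hmem : {y : E 4 | 0 < y 3} ∈ nhds x := by
    have hopen : IsOpen {y : E 4 | 0 < y 3} :=
      isOpen_lt continuous_const (EuclideanSpace.proj (3 : Fin 4)).continuous
    exact hopen.mem_nhds hx
  -- second partials of sqDil
  have hpd2 : ∀ i : Fin 4,
      pd (pd sqDil i) i x = if i = 3 then 6 * ((x 3) ^ 4)⁻¹ else 0 := by
    intro i
    have hev : pd sqDil i =ᶠ[nhds x]
        (fun y : E 4 => if i = 3 then (fun t : ℝ => -2 * t ^ (-3 : ℤ)) (y 3) else 0) := by
      filter_upwards [hmem] with y hy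
      rw [pd_sqDil i y (ne_of_gt hy)]
      by_cases hi : i = 3
      · simp only [if_pos hi, zp3]
      · simp only [if_neg hi]
    rw [pd_congr hev]
    by_cases hi : i = 3
    · simp only [if_pos hi]
      have hdiff : DifferentiableAt ℝ (fun t : ℝ => -2 * t ^ (-3 : ℤ)) (x 3) :=
        (differentiableAt_zpow.mpr (Or.inl ht)).const_mul _
      rw [pd_comp (fun t : ℝ => -2 * t ^ (-3 : ℤ)) i x hdiff, if_pos hi,
        deriv_const_mul _ (differentiableAt_zpow.mpr (Or.inl ht)), deriv_zpow]
      rw [show ((-3:ℤ) - 1) = -4 from by norm_num, zp4]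
      push_cast
      ring
    · simp only [if_neg hi]
      exact pd_const 0 i x
  -- lap sqDil
  have hlap : lap sqDil x = 6 * ((x 3) ^ 4)⁻¹ := by
    unfold lap
    rw [Fin.sum_univ_four, hpd2 0, hpd2 1, hpd2 2, hpd2 3,
      if_neg (by decide), if_neg (by decide), if_neg (by decide), if_pos rfl]
    ring
  -- divergence of T
  have hdivpd : ∀ i : Fin 4,
      pd (fun y => T y i) i x = if i = 3 then -6 * ((x 3) ^ 4)⁻¹ else 0 := by
    intro i
    have hfun : (fun y : E 4 => T y i)
        = (fun y : E 4 => if i = 3 then (fun t : ℝ => 2 * t ^ (-3 : ℤ)) (y 3) else 0) := by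
      funext y
      rw [T_coord y i]
      by_cases hi : i = 3
      · simp only [if_pos hi, zp3]
      · simp only [if_neg hi]
    rw [hfun]
    by_cases hi : i = 3
    · simp only [if_pos hi]
      have hdiff : DifferentiableAt ℝ (fun t : ℝ => 2 * t ^ (-3 : ℤ)) (x 3) :=
        (differentiableAt_zpow.mpr (Or.inl ht)).const_mul _
      rw [pd_comp (fun t : ℝ => 2 * t ^ (-3 : ℤ)) i x hdiff, if_pos hi,
        deriv_const_mul _ (differentiableAt_zpow.mpr (Or.inl ht)), deriv_zpow]
      rw [show ((-3:ℤ) - 1) = -4 from by norm_num, zp4]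
      push_cast
      ring
    · simp only [if_neg hi]
      exact pd_const 0 i x
  have hdiv : div' T x = -6 * ((x 3) ^ 4)⁻¹ := by
    unfold div'
    rw [Fin.sum_univ_four, hdivpd 0, hdivpd 1, hdivpd 2, hdivpd 3,
      if_neg (by decide), if_neg (by decide), if_neg (by decide), if_pos rfl]
    ring
  have hsum : 4 * lap sqDil x + 2 * div' T x = 12 / (x 3) ^ 4 := by
    rw [hlap, hdiv]
    field_simp
    norm_num
  have hnorm : sqDil x * ‖tau x‖ ^ 2 = 4 / (x 3) ^ 4 := by
    simp only [sqDil, tau, EuclideanSpace.norm_single, Real.norm_eq_abs]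
    rw [sq_abs]
    field_simp
    ring
  refine ⟨?_, hsum, hnorm, ?_⟩
  · intro i
    rw [T_coord, EuclideanSpace.single_apply]
    by_cases hi : i = 3
    · rw [if_pos hi, if_pos hi, div_eq_mul_inv]
    · rw [if_neg hi, if_neg hi]
  · rw [hsum, hnorm]
    intro h
    have h4 : (0:ℝ) < (x 3) ^ 4 := by positivity
    rw [div_eq_div_iff (ne_of_gt h4) (ne_of_gt h4)] at h
    nlinarith
end
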